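/- arXiv:math/0309216 — 2 statements merged into one kernel-verified Lean document; each statement's English description precedes it below -/
import Mathlib

section
/- Let n ≥ 2 and let G be a real symmetric (n+1)×(n+1) matrix with G_{ii} = 1 for all i and G_{ij} ∈ [−1, 1) for all i ≠ j. Assume that G has exactly n positive eigenvalues and exactly one negative eigenvalue (counted with multiplicity), and that every off-diagonal cofactor satisfies c_{ij} > 0 for i ≠ j. Then there exist vectors u_1, …, u_{n+1} ∈ ℝ^{n+1} with ⟨u_i, u_j⟩ = G_{ij} for all i, j (in particular each u_i is unit spacelike), such that, setting w_i := Σ_{k=1}^{n+1} c_{ik} u_k and v_i := w_i / √|c_{ii} · det G| if c_{ii} ≠ 0 and v_i := w_i if c_{ii} = 0, the vectors v_1, …, v_{n+1} are linearly independent, satisfy ⟨v_i, v_j⟩ < 0 for all i ≠ j, and satisfy ⟨v_i, v_i⟩ = −1 if c_{ii} > 0, ⟨v_i, v_i⟩ = 0 with v_i ≠ 0 if c_{ii} = 0, and ⟨v_i, v_i⟩ = 1 if c_{ii} < 0. -/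
noncomputable section
open Matrix BigOperators

/-- The Lorentzian inner product on `ℝ^{n+1}`:
`⟨x, y⟩ = -x₀y₀ + x₁y₁ + ⋯ + xₙyₙ`. -/
def lform {n : ℕ} (x y : Fin (n + 1) → ℝ) : ℝ :=
  ∑ i, (if i = 0 then (-1 : ℝ) else 1) * x i * y i

/-- The `(i,j)` cofactor of a square matrix: `(-1)^(i+j)` times the determinant
of the matrix obtained by deleting the `i`-th row and the `j`-th column. -/
def cofactor {n : ℕ} (G : Matrix (Fin (n + 1)) (Fin (n + 1)) ℝ) (i j : Fin (n + 1)) : ℝ :=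
  (-1 : ℝ) ^ ((i : ℕ) + (j : ℕ)) * (G.submatrix i.succAbove j.succAbove).det

lemma lform_comm {n : ℕ} (x y : Fin (n + 1) → ℝ) : lform x y = lform y x :=
  Finset.sum_congr rfl fun i _ => by ring

lemma lform_zero_left {n : ℕ} (y : Fin (n + 1) → ℝ) : lform 0 y = 0 := by simp [lform]

lemma lform_smul_left {n : ℕ} (c : ℝ) (x y : Fin (n + 1) → ℝ) :
    lform (c • x) y = c * lform x y := by
  unfold lform
  rw [Finset.mul_sum]
  exact Finset.sum_congr rfl fun i _ => by simp only [Pi.smul_apply, smul_eq_mul]; ring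

lemma lform_sum_left {n : ℕ} {ι : Type*} (s : Finset ι) (f : ι → Fin (n + 1) → ℝ)
    (y : Fin (n + 1) → ℝ) : lform (∑ k ∈ s, f k) y = ∑ k ∈ s, lform (f k) y := by
  simp only [lform, Finset.sum_apply, Finset.mul_sum, Finset.sum_mul]
  exact Finset.sum_comm

lemma cofactor_eq_adjugate {n : ℕ} (G : Matrix (Fin (n + 1)) (Fin (n + 1)) ℝ) (i j) :
    cofactor G i j = adjugate G j i := by
  rw [adjugate_fin_succ_eq_det_submatrix]; rfl

theorem stmt0 (n : ℕ) (hn : 2 ≤ n)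
    (G : Matrix (Fin (n + 1)) (Fin (n + 1)) ℝ)
    (hG : G.IsHermitian)
    (hdiag : ∀ i, G i i = 1)
    (hoff : ∀ i j, i ≠ j → G i j ∈ Set.Ico (-1 : ℝ) 1)
    (hpos : (Finset.univ.filter fun i => 0 < hG.eigenvalues i).card = n)
    (hneg : (Finset.univ.filter fun i => hG.eigenvalues i < 0).card = 1)
    (hcof : ∀ i j, i ≠ j → 0 < cofactor G i j) :
    ∃ u : Fin (n + 1) → (Fin (n + 1) → ℝ),
      (∀ i j, lform (u i) (u j) = G i j) ∧
      ∀ w v : Fin (n + 1) → (Fin (n + 1) → ℝ),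
        (∀ i, w i = ∑ k, cofactor G i k • u k) →
        (∀ i, v i = if cofactor G i i ≠ 0
            then (Real.sqrt |cofactor G i i * G.det|)⁻¹ • w i else w i) →
        LinearIndependent ℝ v ∧
        (∀ i j, i ≠ j → lform (v i) (v j) < 0) ∧
        (∀ i, 0 < cofactor G i i → lform (v i) (v i) = -1) ∧
        (∀ i, cofactor G i i = 0 → lform (v i) (v i) = 0 ∧ v i ≠ 0) ∧
        (∀ i, cofactor G i i < 0 → lform (v i) (v i) = 1) := by
  classical
  set μ := hG.eigenvalues with hμ
  -- eigenvalue classification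
  have hdisj : Disjoint (Finset.univ.filter fun i => 0 < μ i)
      (Finset.univ.filter fun i => μ i < 0) := by
    rw [Finset.disjoint_filter]
    intro i _ h1 h2
    exact absurd h1 (not_lt.2 h2.le)
  have hunion : ((Finset.univ.filter fun i => 0 < μ i) ∪
      (Finset.univ.filter fun i => μ i < 0)) = Finset.univ := by
    apply Finset.eq_univ_of_card
    rw [Finset.card_union_of_disjoint hdisj, hpos, hneg]
    simp
  have hclass : ∀ i, 0 < μ i ∨ μ i < 0 := by
    intro i
    have hmem := Finset.mem_univ i
    rw [← hunion] at hmem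
    rcases Finset.mem_union.1 hmem with h | h
    · exact Or.inl (Finset.mem_filter.1 h).2
    · exact Or.inr (Finset.mem_filter.1 h).2
  obtain ⟨i₀, hi₀⟩ := Finset.card_eq_one.1 hneg
  have hneg_iff : ∀ i, μ i < 0 ↔ i = i₀ := by
    intro i
    constructor
    · intro h
      have : i ∈ (Finset.univ.filter fun i => μ i < 0) := Finset.mem_filter.2 ⟨Finset.mem_univ i, h⟩
      rw [hi₀, Finset.mem_singleton] at this; exact this
    · intro h
      rw [h]
      have : i₀ ∈ (Finset.univ.filter fun i => μ i < 0) := by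
        rw [hi₀]; exact Finset.mem_singleton_self i₀
      exact (Finset.mem_filter.1 this).2
  have hpos' : ∀ i, i ≠ i₀ → 0 < μ i := by
    intro i hi
    rcases hclass i with h | h
    · exact h
    · exact absurd ((hneg_iff i).1 h) hi
  have hne : ∀ i, μ i ≠ 0 := by
    intro i
    rcases hclass i with h | h
    · exact h.ne'
    · exact h.ne
  -- determinant negative
  have hdetprod : G.det = ∏ i, μ i := by simpa using hG.det_eq_prod_eigenvalues
  have hdet_neg : G.det < 0 := by
    rw [hdetprod, ← Finset.mul_prod_erase Finset.univ μ (Finset.mem_univ i₀)]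
    apply mul_neg_of_neg_of_pos ((hneg_iff i₀).2 rfl)
    apply Finset.prod_pos
    intro i hi
    exact hpos' i (Finset.ne_of_mem_erase hi)
  have hdet_ne : G.det ≠ 0 := hdet_neg.ne
  -- spectral decomposition
  set U : Matrix (Fin (n+1)) (Fin (n+1)) ℝ := ↑(hG.eigenvectorUnitary) with hU
  have hspec : G = U * diagonal μ * Uᵀ := by
    have := hG.spectral_theorem
    simp only [RCLike.ofReal_real_eq_id, Unitary.conjStarAlgAut_apply] at this
    exact this
  set D : Matrix (Fin (n+1)) (Fin (n+1)) ℝ := diagonal (fun i => Real.sqrt |μ i|) with hD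
  set S : Matrix (Fin (n+1)) (Fin (n+1)) ℝ :=
    diagonal (fun i => if i = i₀ then (-1 : ℝ) else 1) with hS
  set A : Matrix (Fin (n+1)) (Fin (n+1)) ℝ := U * D with hA
  have hDSD : D * S * D = diagonal μ := by
    rw [hD, hS, diagonal_mul_diagonal, diagonal_mul_diagonal]
    have hfun : (fun i => (Real.sqrt |μ i| * if i = i₀ then (-1:ℝ) else 1) * Real.sqrt |μ i|) = μ := by
      funext i
      by_cases hii : i = i₀
      · have h : μ i < 0 := (hneg_iff i).2 hii
        rw [if_pos hii, abs_of_neg h]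
        have h2 := Real.mul_self_sqrt (neg_nonneg.2 h.le)
        nlinarith [h2]
      · have h : 0 < μ i := hpos' i hii
        rw [if_neg hii, abs_of_pos h]
        have h2 := Real.mul_self_sqrt h.le
        nlinarith [h2]
    exact congrArg diagonal hfun
  have hASA : A * S * Aᵀ = G := by
    rw [hA, transpose_mul, hspec]
    have hDT : Dᵀ = D := by rw [hD, diagonal_transpose]
    rw [hDT, ← hDSD]
    noncomm_ring
  set σ : Equiv.Perm (Fin (n+1)) := Equiv.swap 0 i₀ with hσ
  set u : Fin (n+1) → (Fin (n+1) → ℝ) := fun i => fun j => A i (σ j) with hu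
  have hGram : ∀ i k, lform (u i) (u k) = G i k := by
    intro i k
    have hrhs : G i k = ∑ j, (if j = i₀ then (-1:ℝ) else 1) * A i j * A k j := by
      rw [← hASA, Matrix.mul_apply]
      refine Finset.sum_congr rfl fun j _ => ?_
      rw [hS, Matrix.mul_diagonal, transpose_apply]
      ring
    rw [hrhs]
    unfold lform
    refine Fintype.sum_equiv σ _ _ fun j => ?_
    have hiff : (σ j = i₀) ↔ (j = 0) := by
      constructor
      · intro h
        have : σ j = σ 0 := by rw [h, hσ, Equiv.swap_apply_left]
        exact σ.injective this
      · rintro rfl; rw [hσ, Equiv.swap_apply_left]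
    by_cases hj : j = 0
    · rw [if_pos hj, if_pos (hiff.2 hj)]
    · rw [if_neg hj, if_neg (fun h => hj (hiff.1 h))]
  refine ⟨u, hGram, ?_⟩
  intro w v hw hv
  -- symmetry of G and of cofactors
  have hGsym : ∀ i j, G i j = G j i := by
    intro i j
    have := congrFun (congrFun hG.eq i) j
    simpa [Matrix.conjTranspose_apply] using this.symm
  have hGT : Gᵀ = G := by
    ext i j; exact hGsym j i
  have hadjT : (adjugate G)ᵀ = adjugate G := by
    rw [Matrix.adjugate_transpose, hGT]
  have hadjsym : ∀ i j, adjugate G i j = adjugate G j i := by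
    intro i j
    conv_lhs => rw [← hadjT]
    rfl
  have hcsym : ∀ i j, cofactor G i j = cofactor G j i := by
    intro i j
    rw [cofactor_eq_adjugate, cofactor_eq_adjugate, hadjsym]
  have hkey : ∀ i j, ∑ k, cofactor G i k * G k j = G.det * (if i = j then 1 else 0) := by
    intro i j
    have h1 : ∑ k, cofactor G i k * G k j = (adjugate G * G) i j := by
      rw [Matrix.mul_apply]
      refine Finset.sum_congr rfl fun k _ => ?_
      rw [cofactor_eq_adjugate, hadjsym]
    rw [h1, Matrix.adjugate_mul, Matrix.smul_apply, Matrix.one_apply, smul_eq_mul]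
  have hwu : ∀ i j, lform (w i) (u j) = G.det * (if i = j then 1 else 0) := by
    intro i j
    rw [hw i, lform_sum_left]
    rw [Finset.sum_congr rfl fun k _ => by rw [lform_smul_left, hGram]]
    exact hkey i j
  have hww : ∀ i j, lform (w i) (w j) = cofactor G i j * G.det := by
    intro i j
    rw [lform_comm, hw j, lform_sum_left]
    rw [Finset.sum_congr rfl fun k (_ : k ∈ Finset.univ) => by
      rw [lform_smul_left, lform_comm, hwu]]
    rw [Fintype.sum_eq_single i (fun b hb => by rw [if_neg (Ne.symm hb), mul_zero, mul_zero])]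
    rw [if_pos rfl, mul_one, hcsym j i]
  -- the scaling factors
  set lam : Fin (n+1) → ℝ := fun i =>
    if cofactor G i i ≠ 0 then (Real.sqrt |cofactor G i i * G.det|)⁻¹ else 1 with hlam
  have hv' : ∀ i, v i = lam i • w i := by
    intro i
    rw [hv i]
    simp only [hlam]
    by_cases hc : cofactor G i i ≠ 0
    · rw [if_pos hc, if_pos hc]
    · rw [if_neg hc, if_neg hc, one_smul]
  have hlampos : ∀ i, 0 < lam i := by
    intro i
    simp only [hlam]
    by_cases hc : cofactor G i i ≠ 0
    · rw [if_pos hc]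
      exact inv_pos.2 (Real.sqrt_pos.2 (abs_pos.2 (mul_ne_zero hc hdet_ne)))
    · rw [if_neg hc]; exact one_pos
  have hvv : ∀ i j, lform (v i) (v j) = lam i * lam j * (cofactor G i j * G.det) := by
    intro i j
    rw [hv' i, hv' j, lform_smul_left, lform_comm (w i), lform_smul_left, lform_comm (w j), hww]
    ring
  refine ⟨?_, ?_, ?_, ?_, ?_⟩
  · -- linear independence
    rw [Fintype.linearIndependent_iff]
    intro g hg j
    have h0 : lform (∑ i, g i • v i) (u j) = 0 := by rw [hg]; exact lform_zero_left _
    rw [lform_sum_left] at h0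
    rw [Finset.sum_congr rfl fun i (_ : i ∈ Finset.univ) => by
      rw [lform_smul_left, hv' i, lform_smul_left, hwu]] at h0
    rw [Fintype.sum_eq_single j (fun b hb => by
      rw [if_neg hb, mul_zero, mul_zero, mul_zero])] at h0
    rw [if_pos rfl, mul_one] at h0
    -- h0 : g j * (lam j * G.det) = 0
    have h1 : lam j * G.det ≠ 0 := mul_ne_zero (hlampos j).ne' hdet_ne
    have h2 : g j * (lam j * G.det) = 0 := by linarith [h0]
    exact (mul_eq_zero.1 h2).resolve_right h1
  · -- off-diagonal negative
    intro i j hij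
    rw [hvv]
    exact mul_neg_of_pos_of_neg (mul_pos (hlampos i) (hlampos j))
      (mul_neg_of_pos_of_neg (hcof i j hij) hdet_neg)
  · -- positive diagonal cofactor
    intro i hc
    have hcne : cofactor G i i ≠ 0 := hc.ne'
    have hlam_eq : lam i = (Real.sqrt |cofactor G i i * G.det|)⁻¹ := by
      simp only [hlam]
      rw [if_pos hcne]
    rw [hvv, hlam_eq]
    set t := cofactor G i i * G.det with ht
    have htneg : t < 0 := mul_neg_of_pos_of_neg hc hdet_neg
    have hst : Real.sqrt |t| * Real.sqrt |t| = |t| := Real.mul_self_sqrt (abs_nonneg t)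
    have heq : (Real.sqrt |t|)⁻¹ * (Real.sqrt |t|)⁻¹ * t = t / (Real.sqrt |t| * Real.sqrt |t|) := by
      rw [div_eq_mul_inv, mul_inv]; ring
    rw [heq, hst, abs_of_neg htneg, div_neg, div_self htneg.ne]
  · -- zero diagonal cofactor
    intro i hc
    constructor
    · rw [hvv, hc]; ring
    · rw [hv' i]
      intro h0
      have hw0 : w i = 0 := by
        rcases smul_eq_zero.1 h0 with h | h
        · exact absurd h (hlampos i).ne'
        · exact h
      have hd := hwu i i
      rw [hw0, lform_zero_left, if_pos rfl, mul_one] at hd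
      exact hdet_ne hd.symm
  · -- negative diagonal cofactor
    intro i hc
    have hcne : cofactor G i i ≠ 0 := hc.ne
    have hlam_eq : lam i = (Real.sqrt |cofactor G i i * G.det|)⁻¹ := by
      simp only [hlam]
      rw [if_pos hcne]
    rw [hvv, hlam_eq]
    set t := cofactor G i i * G.det with ht
    have htpos : 0 < t := mul_pos_of_neg_of_neg hc hdet_neg
    have hst : Real.sqrt |t| * Real.sqrt |t| = |t| := Real.mul_self_sqrt (abs_nonneg t)
    have heq : (Real.sqrt |t|)⁻¹ * (Real.sqrt |t|)⁻¹ * t = t / (Real.sqrt |t| * Real.sqrt |t|) := by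
      rw [div_eq_mul_inv, mul_inv]; ring
    rw [heq, hst, abs_of_pos htpos, div_self htpos.ne']
end
end

section
/- Let n ≥ 2 and let u_1, …, u_{n+1} ∈ ℝ^{n+1} be vectors spanning ℝ^{n+1} with ⟨u_i, u_i⟩ = 1 for all i, and let G be the (n+1)×(n+1) matrix with G_{ij} = ⟨u_i, u_j⟩. Suppose there exist nonzero vectors v_1, …, v_{n+1} ∈ ℝ^{n+1} such that ⟨v_i, u_j⟩ = 0 for all i ≠ j, ⟨v_i, u_i⟩ < 0 for all i, and ⟨v_i, v_j⟩ < 0 for all i ≠ j. Then G has exactly n positive eigenvalues and exactly one negative eigenvalue (counted with multiplicity), and every off-diagonal cofactor satisfies c_{ij} > 0 for i ≠ j. -/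
noncomputable section
open Matrix BigOperators

def eps (n : ℕ) : Fin (n + 1) → ℝ := fun i => if i = 0 then -1 else 1

def Jm (n : ℕ) : Matrix (Fin (n + 1)) (Fin (n + 1)) ℝ := Matrix.diagonal (eps n)

lemma lform_eq_dot {n : ℕ} (x y : Fin (n + 1) → ℝ) : lform x y = x ⬝ᵥ (Jm n *ᵥ y) := by
  unfold lform Jm eps dotProduct
  simp only [Matrix.mulVec_diagonal]
  exact Finset.sum_congr rfl fun i _ => by ring

lemma Jm_mul_Jm (n : ℕ) : Jm n * Jm n = 1 := by
  unfold Jm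
  rw [Matrix.diagonal_mul_diagonal, ← Matrix.diagonal_one]
  have : (fun i => eps n i * eps n i) = fun _ : Fin (n+1) => (1:ℝ) := by
    funext i; unfold eps; split <;> norm_num
  rw [this]

lemma Jm_transpose (n : ℕ) : (Jm n)ᵀ = Jm n := Matrix.diagonal_transpose _

lemma det_Jm (n : ℕ) : (Jm n).det = -1 := by
  unfold Jm eps
  rw [Matrix.det_diagonal]
  rw [Finset.prod_ite_eq' Finset.univ (0 : Fin (n+1)) (fun _ => (-1 : ℝ))]
  simp

lemma lform_smul {n : ℕ} (a : ℝ) (x y : Fin (n + 1) → ℝ) :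
    lform (a • x) y = a * lform x y := by
  unfold lform
  rw [Finset.mul_sum]
  exact Finset.sum_congr rfl fun i _ => by simp [Pi.smul_apply]; ring

lemma lform_smul_right {n : ℕ} (a : ℝ) (x y : Fin (n + 1) → ℝ) :
    lform x (a • y) = a * lform x y := by
  rw [lform_comm, lform_smul, lform_comm]

set_option maxHeartbeats 1600000 in
theorem stmt1 (n : ℕ) (hn : 2 ≤ n)
    (u : Fin (n + 1) → (Fin (n + 1) → ℝ))
    (hspan : Submodule.span ℝ (Set.range u) = ⊤)
    (hunit : ∀ i, lform (u i) (u i) = 1)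
    (G : Matrix (Fin (n + 1)) (Fin (n + 1)) ℝ)
    (hGdef : ∀ i j, G i j = lform (u i) (u j))
    (v : Fin (n + 1) → (Fin (n + 1) → ℝ))
    (hv0 : ∀ i, v i ≠ 0)
    (hvu : ∀ i j, i ≠ j → lform (v i) (u j) = 0)
    (hvui : ∀ i, lform (v i) (u i) < 0)
    (hvv : ∀ i j, i ≠ j → lform (v i) (v j) < 0) :
    ∃ hG : G.IsHermitian,
      (Finset.univ.filter fun i => 0 < hG.eigenvalues i).card = n ∧
      (Finset.univ.filter fun i => hG.eigenvalues i < 0).card = 1 ∧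
      ∀ i j, i ≠ j → 0 < cofactor G i j := by
  classical
  set U : Matrix (Fin (n+1)) (Fin (n+1)) ℝ := Matrix.of u with hU
  -- G = U * (J * Uᵀ)
  have hGU : G = U * (Jm n * Uᵀ) := by
    ext i j
    rw [hGdef, Matrix.mul_apply]
    unfold lform
    refine Finset.sum_congr rfl fun k _ => ?_
    simp only [Jm, Matrix.diagonal_mul, Matrix.transpose_apply, hU, Matrix.of_apply, eps]
    ring
  -- dual rows
  set w : Fin (n+1) → (Fin (n+1) → ℝ) := fun i => (lform (v i) (u i))⁻¹ • v i with hw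
  set M : Matrix (Fin (n+1)) (Fin (n+1)) ℝ := Matrix.of w with hM
  have hcine : ∀ i, lform (v i) (u i) ≠ 0 := fun i => ne_of_lt (hvui i)
  have hwu : ∀ i j, lform (w i) (u j) = if i = j then 1 else 0 := by
    intro i j
    rw [hw]
    simp only [lform_smul]
    by_cases h : i = j
    · subst h; rw [inv_mul_cancel₀ (hcine i), if_pos rfl]
    · rw [hvu i j h, mul_zero, if_neg h]
  have hMJU : M * (Jm n * Uᵀ) = 1 := by
    ext i j
    rw [← Matrix.mul_assoc, Matrix.mul_apply]
    have : ∑ k, (M * Jm n) i k * Uᵀ k j = lform (w i) (u j) := by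
      unfold lform
      refine Finset.sum_congr rfl fun k _ => ?_
      simp only [Jm, Matrix.mul_diagonal, Matrix.transpose_apply, hM, hU, Matrix.of_apply, eps]
      ring
    rw [this, hwu i j, Matrix.one_apply]
  have hJUM : (Jm n * Uᵀ) * M = 1 := mul_eq_one_comm.mp hMJU
  have hUtM : Uᵀ * M = Jm n := by
    calc Uᵀ * M = (Jm n * Jm n) * (Uᵀ * M) := by rw [Jm_mul_Jm, one_mul]
      _ = Jm n * ((Jm n * Uᵀ) * M) := by rw [Matrix.mul_assoc, Matrix.mul_assoc]
      _ = Jm n := by rw [hJUM, mul_one]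
  have hUJMt : U * (Jm n * Mᵀ) = 1 := by
    have h := congrArg Matrix.transpose hMJU
    rwa [Matrix.transpose_mul, Matrix.transpose_mul, Matrix.transpose_one, Jm_transpose,
      Matrix.transpose_transpose, Matrix.mul_assoc] at h
  have hGH : G * (M * Jm n * Mᵀ) = 1 := by
    rw [hGU]
    calc U * (Jm n * Uᵀ) * (M * Jm n * Mᵀ)
        = U * (Jm n * ((Uᵀ * M) * (Jm n * Mᵀ))) := by
          simp only [Matrix.mul_assoc]
      _ = U * (Jm n * (Jm n * (Jm n * Mᵀ))) := by rw [hUtM]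
      _ = U * (Jm n * Mᵀ) := by
          rw [← Matrix.mul_assoc (Jm n) (Jm n), Jm_mul_Jm, one_mul]
      _ = 1 := hUJMt
  -- Hermitian
  have hG : G.IsHermitian := by
    ext i j
    rw [Matrix.conjTranspose_apply, hGdef, hGdef, star_trivial]
    exact lform_comm _ _
  -- determinants
  have hdetU : U.det ≠ 0 := by
    intro h
    have h1 := congrArg Matrix.det hMJU
    rw [Matrix.det_mul, Matrix.det_mul, Matrix.det_transpose, h, Matrix.det_one] at h1
    simp at h1
  have hdetG : G.det = -(U.det ^ 2) := by
    rw [hGU, Matrix.det_mul, Matrix.det_mul, Matrix.det_transpose, det_Jm]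
    ring
  have hdetGneg : G.det < 0 := by
    have h2 : (0:ℝ) < U.det ^ 2 :=
      lt_of_le_of_ne (sq_nonneg _) (Ne.symm (pow_ne_zero 2 hdetU))
    rw [hdetG]; linarith
  -- eigenvalues
  set lam : Fin (n+1) → ℝ := hG.eigenvalues with hlam
  have hprod : ∏ i, lam i = G.det := by
    have h := hG.det_eq_prod_eigenvalues
    simpa using h.symm
  have hne : ∀ i, lam i ≠ 0 := by
    intro i h
    rw [Finset.prod_eq_zero (Finset.mem_univ i) h] at hprod
    exact absurd hprod.symm (ne_of_lt hdetGneg)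
  have hcards : (Finset.univ.filter fun i => 0 < lam i).card
      + (Finset.univ.filter fun i => lam i < 0).card = n + 1 := by
    have h1 := Finset.card_filter_add_card_filter_not
      (s := (Finset.univ : Finset (Fin (n+1)))) (p := fun i => 0 < lam i)
    have h2 : (Finset.univ.filter fun i => ¬ 0 < lam i)
        = (Finset.univ.filter fun i => lam i < 0) := by
      apply Finset.filter_congr
      intro i _
      simp only [not_lt, eq_iff_iff]
      constructor
      · intro h; exact lt_of_le_of_ne h (hne i)
      · intro h; exact le_of_lt h
    rw [h2] at h1
    simpa using h1
  have hneg1 : 1 ≤ (Finset.univ.filter fun i => lam i < 0).card := by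
    rw [Nat.one_le_iff_ne_zero]
    intro h
    rw [Finset.card_eq_zero, Finset.filter_eq_empty_iff] at h
    have hpos : ∀ i, 0 < lam i := fun i =>
      lt_of_le_of_ne (not_lt.mp (h (Finset.mem_univ i))) (Ne.symm (hne i))
    have : 0 < ∏ i, lam i := Finset.prod_pos fun i _ => hpos i
    rw [hprod] at this
    linarith
  have hnegle : (Finset.univ.filter fun i => lam i < 0).card ≤ 1 := by
    by_contra hcon
    push_neg at hcon
    set P : Matrix (Fin (n+1)) (Fin (n+1)) ℝ := (hG.eigenvectorUnitary : Matrix (Fin (n+1)) (Fin (n+1)) ℝ) with hP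
    have hstar : star P = Pᵀ := by
      ext a b
      simp [Matrix.conjTranspose_apply]
    have hPtP : Pᵀ * P = 1 := by
      have h := Matrix.mem_unitaryGroup_iff'.mp hG.eigenvectorUnitary.2
      rwa [hstar] at h
    have hspec : G = P * Matrix.diagonal lam * Pᵀ := by
      have h := hG.spectral_theorem
      rwa [Unitary.conjStarAlgAut_apply, ← hP, hstar, show RCLike.ofReal ∘ hG.eigenvalues = lam from funext fun i => rfl] at h
    have hQspec : ∀ c : Fin (n+1) → ℝ,
        (P *ᵥ c) ⬝ᵥ (G *ᵥ (P *ᵥ c)) = ∑ k, lam k * (c k)^2 := by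
      intro c
      have h1 : G *ᵥ (P *ᵥ c) = P *ᵥ (Matrix.diagonal lam *ᵥ c) := by
        rw [hspec, Matrix.mulVec_mulVec, Matrix.mul_assoc (P * Matrix.diagonal lam), hPtP,
          mul_one, ← Matrix.mulVec_mulVec]
      rw [h1, ← Matrix.vecMul_transpose, ← Matrix.dotProduct_mulVec, Matrix.mulVec_mulVec,
        hPtP, Matrix.one_mulVec]
      simp only [dotProduct, Matrix.mulVec_diagonal]
      exact Finset.sum_congr rfl fun k _ => by ring
    have hQU : ∀ x : Fin (n+1) → ℝ, x ⬝ᵥ (G *ᵥ x) = lform (Uᵀ *ᵥ x) (Uᵀ *ᵥ x) := by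
      intro x
      rw [lform_eq_dot, Matrix.mulVec_mulVec, Matrix.mulVec_transpose,
        ← Matrix.dotProduct_mulVec, Matrix.mulVec_mulVec, ← hGU]
    set S := Finset.univ.filter (fun i => lam i < 0) with hS
    have hPunit : IsUnit P := by
      rw [Matrix.isUnit_iff_isUnit_det, isUnit_iff_ne_zero]
      intro h
      have h2 := congrArg Matrix.det hPtP
      rw [Matrix.det_mul, Matrix.det_transpose, h] at h2
      simp at h2
    have hlin : LinearIndependent ℝ (fun j => Pᵀ j) :=
      Matrix.linearIndependent_cols_iff_isUnit.mpr hPunit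
    have hlinS : LinearIndependent ℝ (fun j : {k // k ∈ S} => Pᵀ (j : Fin (n+1))) :=
      hlin.comp _ Subtype.val_injective
    set Vneg : Submodule ℝ (Fin (n+1) → ℝ) :=
      Submodule.span ℝ (Set.range (fun j : {k // k ∈ S} => Pᵀ (j : Fin (n+1)))) with hV
    have hVrank : Module.finrank ℝ Vneg = S.card := by
      rw [hV, finrank_span_eq_card hlinS, Fintype.card_coe]
    have hVneg : ∀ x ∈ Vneg, x ⬝ᵥ (G *ᵥ x) ≤ 0 := by
      intro x hx
      rw [hV, Submodule.mem_span_range_iff_exists_fun] at hx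
      obtain ⟨c, hc⟩ := hx
      set c' : Fin (n+1) → ℝ := fun k => if h : k ∈ S then c ⟨k, h⟩ else 0 with hc'
      have hxc : x = P *ᵥ c' := by
        funext a
        rw [← hc]
        calc (∑ j : {k // k ∈ S}, c j • Pᵀ (j : Fin (n+1))) a
            = ∑ j : {k // k ∈ S}, c' (j : Fin (n+1)) * P a (j : Fin (n+1)) := by
              rw [Finset.sum_apply]
              refine Finset.sum_congr rfl fun j _ => ?_
              simp [hc', j.2]
          _ = ∑ k ∈ S, c' k * P a k := Finset.sum_coe_sort S (fun k : Fin (n+1) => c' k * P a k)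
          _ = ∑ k, c' k * P a k :=
              Finset.sum_subset (Finset.subset_univ S) (fun k _ hk => by simp [hc', hk])
          _ = (P *ᵥ c') a := by
              simp only [Matrix.mulVec, dotProduct]
              exact Finset.sum_congr rfl fun k _ => by ring
      rw [hxc, hQspec]
      apply Finset.sum_nonpos
      intro k _
      by_cases hk : k ∈ S
      · have hlamk : lam k < 0 := (Finset.mem_filter.mp hk).2
        nlinarith [sq_nonneg (c' k)]
      · simp [hc', hk]
    set φ : (Fin (n+1) → ℝ) →ₗ[ℝ] ℝ :=
      (LinearMap.proj (0 : Fin (n+1))).comp (Matrix.mulVecLin Uᵀ) with hφ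
    have hφapp : ∀ x, φ x = (Uᵀ *ᵥ x) 0 := fun x => rfl
    have hx0 : φ (M *ᵥ Pi.single 0 1) = -1 := by
      rw [hφapp, Matrix.mulVec_mulVec, hUtM]
      simp [Jm, Matrix.mulVec_diagonal, eps]
    have hφsurj : Function.Surjective φ := by
      intro r
      refine ⟨(-r) • (M *ᵥ Pi.single 0 1), ?_⟩
      rw [_root_.map_smul, hx0]
      simp
    have hWrank : Module.finrank ℝ (LinearMap.ker φ) = n := by
      have h := LinearMap.finrank_range_add_finrank_ker φ
      rw [LinearMap.range_eq_top.mpr hφsurj, finrank_top, Module.finrank_self,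
        Module.finrank_fin_fun] at h
      omega
    have hWpos : ∀ x ∈ LinearMap.ker φ, x ≠ 0 → 0 < x ⬝ᵥ (G *ᵥ x) := by
      intro x hx hxne
      have hy0 : (Uᵀ *ᵥ x) 0 = 0 := hx
      have hyne : Uᵀ *ᵥ x ≠ 0 := by
        intro h
        apply hxne
        have h1 : M *ᵥ (Jm n *ᵥ (Uᵀ *ᵥ x)) = x := by
          rw [Matrix.mulVec_mulVec, Matrix.mulVec_mulVec, Matrix.mul_assoc, hMJU,
            Matrix.one_mulVec]
        rw [← h1, h, Matrix.mulVec_zero, Matrix.mulVec_zero]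
      rw [hQU x]
      obtain ⟨k, hk⟩ := Function.ne_iff.mp hyne
      have hk' : (Uᵀ *ᵥ x) k ≠ 0 := hk
      have hk0 : k ≠ 0 := by rintro rfl; exact hk' hy0
      unfold lform
      apply Finset.sum_pos'
      · intro i _
        by_cases h0 : i = 0
        · subst h0; rw [hy0]; simp
        · rw [if_neg h0, one_mul]; exact mul_self_nonneg _
      · exact ⟨k, Finset.mem_univ k, by
          rw [if_neg hk0, one_mul]; exact mul_self_pos.mpr hk'⟩
    have hdim := Submodule.finrank_sup_add_finrank_inf_eq Vneg (LinearMap.ker φ)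
    have hsup : Module.finrank ℝ ↥(Vneg ⊔ LinearMap.ker φ) ≤ n + 1 := by
      have h := Submodule.finrank_le (Vneg ⊔ LinearMap.ker φ)
      rwa [Module.finrank_fin_fun] at h
    have hinf : 1 ≤ Module.finrank ℝ ↥(Vneg ⊓ LinearMap.ker φ) := by omega
    have hnb : Vneg ⊓ LinearMap.ker φ ≠ ⊥ := by
      intro h
      rw [h, finrank_bot] at hinf
      omega
    obtain ⟨x, hx, hxne⟩ := Submodule.exists_mem_ne_zero_of_ne_bot hnb
    exact absurd (hVneg x hx.1) (not_le.mpr (hWpos x hx.2 hxne))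
  have hnegcard : (Finset.univ.filter fun i => lam i < 0).card = 1 := le_antisymm hnegle hneg1
  refine ⟨hG, ?_, hnegcard, ?_⟩
  · show (Finset.univ.filter fun i => 0 < lam i).card = n
    omega
  -- cofactors
  intro i j hij
  have hadj : G.adjugate = G.det • (M * Jm n * Mᵀ) := by
    calc G.adjugate = G.adjugate * (G * (M * Jm n * Mᵀ)) := by rw [hGH, mul_one]
      _ = (G.adjugate * G) * (M * Jm n * Mᵀ) := by rw [← Matrix.mul_assoc, ← Matrix.mul_assoc]
      _ = (G.det • (1 : Matrix (Fin (n+1)) (Fin (n+1)) ℝ)) * (M * Jm n * Mᵀ) := by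
          rw [Matrix.adjugate_mul]
      _ = G.det • (M * Jm n * Mᵀ) := by rw [smul_mul_assoc, one_mul]
  have hH : ∀ a b, (M * Jm n * Mᵀ) a b = lform (w a) (w b) := by
    intro a b
    rw [Matrix.mul_apply]
    unfold lform
    refine Finset.sum_congr rfl fun k _ => ?_
    simp only [Jm, Matrix.mul_diagonal, Matrix.transpose_apply, hM, Matrix.of_apply, eps]
    ring
  have hHneg : (M * Jm n * Mᵀ) j i < 0 := by
    rw [hH j i, hw]
    simp only [lform_smul, lform_smul_right]
    have h1 : (lform (v j) (u j))⁻¹ < 0 := inv_lt_zero.mpr (hvui j)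
    have h2 : (lform (v i) (u i))⁻¹ < 0 := inv_lt_zero.mpr (hvui i)
    have h3 := hvv j i hij.symm
    have := mul_pos_of_neg_of_neg h2 h3
    nlinarith
  have hcof : cofactor G i j = G.adjugate j i := by
    rw [Matrix.adjugate_fin_succ_eq_det_submatrix]
    rfl
  rw [hcof, hadj]
  simp only [Matrix.smul_apply, smul_eq_mul]
  exact mul_pos_of_neg_of_neg hdetGneg hHneg
end
end
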